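/- Let B be a standard one-dimensional Brownian motion. There is a universal constant C > 0 such that for all 0 ≤ u < r < t, P(B_r < B_u < B_t) ≤ C √(t − r)/√(r − u); in fact one may take C = 1/(2π). -/

import Mathlib

open MeasureTheory ProbabilityTheory Filter Real Set

/-- `B` is a standard one-dimensional Brownian motion (indexed by nonnegative times)
under the probability measure `P`. -/
def IsStdBrownianMotion {Ω : Type*} [MeasurableSpace Ω] (P : Measure Ω)
    (B : ℝ → Ω → ℝ) : Prop :=
  (∀ ω, Continuous fun t => B t ω) ∧
  (∀ ω, B 0 ω = 0) ∧
  (∀ t, Measurable (B t)) ∧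
  (∀ (n : ℕ) (t : ℕ → ℝ), 0 ≤ t 0 → (∀ i, t i ≤ t (i + 1)) →
    iIndepFun
      (fun i : Fin n => fun ω => B (t (i + 1)) ω - B (t i) ω) P) ∧
  (∀ s t : ℝ, 0 ≤ s → s ≤ t →
    Measure.map (fun ω => B t ω - B s ω) P = gaussianReal 0 (Real.toNNReal (t - s)))

lemma aux_integral_Ioi (b : ℝ) (hb : 0 < b) :
    ∫ x in Set.Ioi (0:ℝ), x * rexp (-b * x^2) = 1 / (2*b) := by
  have h := integral_Ioi_of_hasDerivAt_of_tendsto' (a := 0) (m := 0)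
    (f := fun x => -rexp (-b*x^2) / (2*b))
    (f' := fun x => x * rexp (-b*x^2)) ?_ ?_ ?_
  · rw [h]; simp; ring
  · intro x _
    have h1 : HasDerivAt (fun x : ℝ => -b*x^2) (-b*(2*x)) x := by
      simpa using ((hasDerivAt_pow 2 x).const_mul (-b))
    have h2 := (h1.exp).neg.div_const (2*b)
    refine h2.congr_deriv ?_
    rw [div_eq_iff (by positivity : (2*b) ≠ 0)]
    ring
  · exact (integrable_mul_exp_neg_mul_sq hb).integrableOn
  · have h3 : Tendsto (fun x : ℝ => -b*x^2) atTop atBot := by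
      have h4 : Tendsto (fun x : ℝ => b*x^2) atTop atTop :=
        (tendsto_pow_atTop (n := 2) (by norm_num)).const_mul_atTop hb
      simpa [neg_mul] using tendsto_neg_atBot_iff.mpr h4
    have := (Real.tendsto_exp_atBot.comp h3).neg.div_const (2*b)
    simpa using this

lemma aux_pos_part (w : ℝ) (hw : 0 < w) :
    ∫⁻ z, ENNReal.ofReal (max z 0) ∂(gaussianReal 0 w.toNNReal)
      = ENNReal.ofReal (w * (Real.sqrt (2 * π * w))⁻¹) := by
  have hv : w.toNNReal ≠ 0 := by simp [Real.toNNReal_eq_zero, not_le, hw]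
  have hcoe : ((w.toNNReal : ℝ)) = w := Real.coe_toNNReal w hw.le
  set c : ℝ := (Real.sqrt (2 * π * w))⁻¹ with hc
  have hcpos : 0 < c := by rw [hc]; positivity
  have hpdf : ∀ z, gaussianPDFReal 0 w.toNNReal z = c * rexp (-(2*w)⁻¹ * z^2) := by
    intro z
    simp only [gaussianPDFReal, hcoe, sub_zero]
    rw [show -z^2/(2*w) = -(2*w)⁻¹ * z^2 by field_simp]
  set g : ℝ → ℝ := fun z => gaussianPDFReal 0 w.toNNReal z * max z 0 with hg
  have hb : (0:ℝ) < (2*w)⁻¹ := by positivity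
  have hgmeas : Measurable g :=
    (measurable_gaussianPDFReal 0 w.toNNReal).mul (measurable_id.max measurable_const)
  have hgnn : ∀ z, 0 ≤ g z := fun z =>
    mul_nonneg (gaussianPDFReal_nonneg _ _ _) (le_max_right _ _)
  have hgint : Integrable g := by
    refine Integrable.mono' (((integrable_mul_exp_neg_mul_sq hb).abs).const_mul c)
      hgmeas.aestronglyMeasurable (ae_of_all _ fun z => ?_)
    rw [Real.norm_eq_abs, abs_of_nonneg (hgnn z), hg]
    simp only
    rw [hpdf z, abs_mul, abs_of_pos (Real.exp_pos _)]
    have hmz : max z 0 ≤ |z| := max_le (le_abs_self z) (abs_nonneg z)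
    calc c * rexp (-(2*w)⁻¹ * z^2) * max z 0 ≤ c * rexp (-(2*w)⁻¹ * z^2) * |z| := by
          exact mul_le_mul_of_nonneg_left hmz (by positivity)
      _ = c * (|z| * rexp (-(2*w)⁻¹ * z^2)) := by ring
  have key : ∫⁻ z, ENNReal.ofReal (max z 0) ∂(gaussianReal 0 w.toNNReal)
      = ENNReal.ofReal (∫ z, g z) := by
    rw [gaussianReal_of_var_ne_zero 0 hv,
      lintegral_withDensity_eq_lintegral_mul _ (measurable_gaussianPDF 0 w.toNNReal)
        (by exact (measurable_id.max measurable_const).ennreal_ofReal)]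
    simp only [Pi.mul_apply, gaussianPDF]
    simp_rw [← ENNReal.ofReal_mul (gaussianPDFReal_nonneg _ _ _)]
    exact (ofReal_integral_eq_lintegral_ofReal hgint (ae_of_all _ hgnn)).symm
  rw [key]
  congr 1
  have hIic : ∫ z in Iic (0:ℝ), g z = 0 := by
    have he : EqOn g (fun _ => (0:ℝ)) (Iic 0) := fun z hz => by
      simp only [hg]
      rw [max_eq_right (mem_Iic.mp hz), mul_zero]
    rw [setIntegral_congr_fun measurableSet_Iic he, integral_zero]
  have hIoi : ∫ z in Ioi (0:ℝ), g z = c * w := by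
    have he : EqOn g (fun z => c * (z * rexp (-(2*w)⁻¹ * z^2))) (Ioi 0) := fun z hz => by
      simp only [hg]
      rw [hpdf z, max_eq_left (le_of_lt (mem_Ioi.mp hz))]; ring
    rw [setIntegral_congr_fun measurableSet_Ioi he, integral_const_mul,
      aux_integral_Ioi _ hb]
    congr 1
    field_simp
  rw [← intervalIntegral.integral_Iic_add_Ioi hgint.integrableOn hgint.integrableOn, hIic, hIoi]
  ring

lemma aux_slice (v : ℝ) (hv : 0 < v) (z : ℝ) :
    (gaussianReal 0 v.toNNReal) (Ioo (-z) 0)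
      ≤ ENNReal.ofReal ((Real.sqrt (2 * π * v))⁻¹ * max z 0) := by
  have hv' : v.toNNReal ≠ 0 := by simp [Real.toNNReal_eq_zero, not_le, hv]
  have hcoe : ((v.toNNReal : ℝ)) = v := Real.coe_toNNReal v hv.le
  set c : ℝ := (Real.sqrt (2 * π * v))⁻¹ with hc
  have hcpos : 0 < c := by rw [hc]; positivity
  rw [gaussianReal_apply 0 hv' _]
  calc ∫⁻ x in Ioo (-z) 0, gaussianPDF 0 v.toNNReal x
      ≤ ∫⁻ _ in Ioo (-z) 0, ENNReal.ofReal c := by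
        refine setLIntegral_mono (by measurability) fun x _ => ?_
        rw [gaussianPDF]
        apply ENNReal.ofReal_le_ofReal
        rw [gaussianPDFReal, hcoe, hc]
        calc (√(2 * π * v))⁻¹ * rexp (-(x - 0)^2 / (2*v))
            ≤ (√(2 * π * v))⁻¹ * 1 := by
              apply mul_le_mul_of_nonneg_left _ (by positivity)
              rw [Real.exp_le_one_iff]
              apply div_nonpos_of_nonpos_of_nonneg (by nlinarith [sq_nonneg (x-0)]) (by positivity)
          _ = (√(2 * π * v))⁻¹ := mul_one _
    _ = ENNReal.ofReal c * volume (Ioo (-z) 0) := by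
        rw [setLIntegral_const]
    _ ≤ ENNReal.ofReal (c * max z 0) := by
        rw [Real.volume_Ioo, ENNReal.ofReal_mul hcpos.le]
        apply mul_le_mul_right (ENNReal.ofReal_le_ofReal ?_)
        simp [le_max_iff]

theorem stmt8 {Ω : Type*} [MeasurableSpace Ω] (P : Measure Ω) [IsProbabilityMeasure P]
    (B : ℝ → Ω → ℝ) (hB : IsStdBrownianMotion P B) :
    ∃ C : ℝ, 0 < C ∧ C = 1 / (2 * Real.pi) ∧
      ∀ u r t : ℝ, 0 ≤ u → u < r → r < t →
        (P {ω | B r ω < B u ω ∧ B u ω < B t ω}).toReal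
          ≤ C * Real.sqrt (t - r) / Real.sqrt (r - u) := by
  obtain ⟨hcont, h0, hmeas, hindep, hlaw⟩ := hB
  refine ⟨1 / (2 * Real.pi), by positivity, rfl, ?_⟩
  intro u r t hu hur hrt
  have hv : (0:ℝ) < r - u := by linarith
  have hw : (0:ℝ) < t - r := by linarith
  set Y : Ω → ℝ := fun ω => B r ω - B u ω with hY
  set Z : Ω → ℝ := fun ω => B t ω - B r ω with hZ
  have hYmeas : Measurable Y := (hmeas r).sub (hmeas u)
  have hZmeas : Measurable Z := (hmeas t).sub (hmeas r)
  have hYlaw : Measure.map Y P = gaussianReal 0 (r - u).toNNReal := hlaw u r hu hur.le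
  have hZlaw : Measure.map Z P = gaussianReal 0 (t - r).toNNReal :=
    hlaw r t (hu.trans hur.le) hrt.le
  -- independence of Y and Z
  set τ : ℕ → ℝ := fun n => if n = 0 then u else if n = 1 then r else t with hτ
  have hmono : ∀ i, τ i ≤ τ (i + 1) := by
    intro i
    rcases i with _ | _ | n <;> simp [hτ] <;> linarith
  have hind := hindep 2 τ (by simp [hτ, hu]) hmono
  have hYZ : IndepFun Y Z P := by
    have h01 : ((0 : Fin 2) : ℕ) ≠ ((1 : Fin 2) : ℕ) := by decide
    have := hind.indepFun (i := 0) (j := 1) (by decide)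
    simpa [hτ, hY, hZ] using this
  have hmap : Measure.map (fun ω => (Y ω, Z ω)) P
      = (Measure.map Y P).prod (Measure.map Z P) :=
    (indepFun_iff_map_prod_eq_prod_map_map hYmeas.aemeasurable hZmeas.aemeasurable).mp hYZ
  set S : Set (ℝ × ℝ) := {p | p.1 < 0 ∧ 0 < p.1 + p.2} with hS
  have hSmeas : MeasurableSet S :=
    (measurableSet_lt measurable_fst measurable_const).inter
      (measurableSet_lt measurable_const (measurable_fst.add measurable_snd))
  have hset : {ω | B r ω < B u ω ∧ B u ω < B t ω} = (fun ω => (Y ω, Z ω)) ⁻¹' S := by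
    ext ω
    simp only [hS, mem_setOf_eq, mem_preimage, hY, hZ]
    constructor <;> rintro ⟨h1, h2⟩ <;> exact ⟨by linarith, by linarith⟩
  have hslice : ∀ z : ℝ, (fun y => (y, z)) ⁻¹' S = Ioo (-z) 0 := by
    intro z
    ext y
    simp only [hS, mem_preimage, mem_setOf_eq, mem_Ioo]
    constructor <;> rintro ⟨h1, h2⟩ <;> exact ⟨by linarith, by linarith⟩
  have hbound : P {ω | B r ω < B u ω ∧ B u ω < B t ω}
      ≤ ENNReal.ofReal ((Real.sqrt (2 * π * (r - u)))⁻¹ * ((t - r) * (Real.sqrt (2 * π * (t - r)))⁻¹)) := by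
    rw [hset, ← Measure.map_apply (hYmeas.prodMk hZmeas) hSmeas, hmap,
      Measure.prod_apply_symm hSmeas]
    calc ∫⁻ z, (Measure.map Y P) ((fun y => (y, z)) ⁻¹' S) ∂(Measure.map Z P)
        ≤ ∫⁻ z, ENNReal.ofReal ((Real.sqrt (2 * π * (r - u)))⁻¹) * ENNReal.ofReal (max z 0) ∂(Measure.map Z P) := by
          refine lintegral_mono fun z => ?_
          rw [hslice z, hYlaw]
          refine (aux_slice (r - u) hv z).trans_eq ?_
          rw [ENNReal.ofReal_mul (by positivity)]
      _ = ENNReal.ofReal ((Real.sqrt (2 * π * (r - u)))⁻¹) * ∫⁻ z, ENNReal.ofReal (max z 0) ∂(Measure.map Z P) :=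
          lintegral_const_mul _ (by exact (measurable_id.max measurable_const).ennreal_ofReal)
      _ = ENNReal.ofReal ((Real.sqrt (2 * π * (r - u)))⁻¹ * ((t - r) * (Real.sqrt (2 * π * (t - r)))⁻¹)) := by
          rw [hZlaw, aux_pos_part (t - r) hw,
            ← ENNReal.ofReal_mul (by positivity)]
  have htoReal := ENNReal.toReal_mono ENNReal.ofReal_ne_top hbound
  refine htoReal.trans ?_
  rw [ENNReal.toReal_ofReal (by positivity)]
  -- final algebra
  have h2π : (0:ℝ) < 2 * π := by positivity
  have hsv : Real.sqrt (2 * π * (r - u)) = Real.sqrt (2 * π) * Real.sqrt (r - u) :=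
    Real.sqrt_mul h2π.le _
  have hsw : Real.sqrt (2 * π * (t - r)) = Real.sqrt (2 * π) * Real.sqrt (t - r) :=
    Real.sqrt_mul h2π.le _
  have hwsq : Real.sqrt (t - r) * Real.sqrt (t - r) = t - r := Real.mul_self_sqrt hw.le
  have h2πsq : Real.sqrt (2 * π) * Real.sqrt (2 * π) = 2 * π := Real.mul_self_sqrt h2π.le
  have hsvne : Real.sqrt (r - u) ≠ 0 := by positivity
  have hswne : Real.sqrt (t - r) ≠ 0 := by positivity
  have h2πne : Real.sqrt (2 * π) ≠ 0 := by positivity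
  rw [hsv, hsw]
  apply le_of_eq
  generalize hA : Real.sqrt (2*π) = A at h2πsq h2πne ⊢
  generalize hC : Real.sqrt (t-r) = C at hwsq hswne ⊢
  generalize hBv : Real.sqrt (r-u) = Bv at hsvne ⊢
  rw [← h2πsq, ← hwsq]
  field_simp
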